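/- Any two nonprincipal ultrafilters on ℕ that are pseudo-P_{𝔟⁺} points (where 𝔟⁺ is the successor cardinal of the bounding number 𝔟) are nearly coherent. -/
import Mathlib


open Cardinal Set Filter

/-- A nonprincipal ultrafilter on ℕ: one that is not of the form `pure n`. -/
def Nonprincipal (U : Ultrafilter ℕ) : Prop := ∀ n : ℕ, U ≠ pure n

/-- `C` is cofinal in the ultrapower `U-prod ω` with respect to `≤_U`. -/
def UCofinal (U : Ultrafilter ℕ) (C : Set (ℕ → ℕ)) : Prop :=
  ∀ f : ℕ → ℕ, ∃ g ∈ C, {n : ℕ | f n ≤ g n} ∈ U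

/-- The cofinality of the ultrapower `U-prod ω`: the least cardinality of a
set of functions cofinal with respect to `≤_U`. -/
noncomputable def cfUProd (U : Ultrafilter ℕ) : Cardinal :=
  sInf {c : Cardinal | ∃ C : Set (ℕ → ℕ), UCofinal U C ∧ c = #C}

/-- The bounding number 𝔟. -/
noncomputable def boundingNumber : Cardinal :=
  sInf {c : Cardinal | ∃ B : Set (ℕ → ℕ),
    (∀ f : ℕ → ℕ, ∃ g ∈ B, {n : ℕ | f n ≤ g n}.Infinite) ∧ c = #B}

/-- The dominating number 𝔡. -/
noncomputable def dominatingNumber : Cardinal :=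
  sInf {c : Cardinal | ∃ D : Set (ℕ → ℕ),
    (∀ f : ℕ → ℕ, ∃ g ∈ D, {n : ℕ | ¬ f n ≤ g n}.Finite) ∧ c = #D}

/-- The splitting number 𝔰. -/
noncomputable def splittingNumber : Cardinal :=
  sInf {c : Cardinal | ∃ S : Set (Set ℕ),
    (∀ X : Set ℕ, X.Infinite → ∃ Y ∈ S, (X ∩ Y).Infinite ∧ (X \ Y).Infinite) ∧ c = #S}

/-- A family of infinite subsets of ℕ is groupwise dense if it is closed under
infinite subsets and finite modifications and, for every partition of ℕ into
consecutive finite intervals (given by a strictly increasing sequence starting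
at 0), the union of some infinitely many of the intervals is in the family. -/
def GroupwiseDense (G : Set (Set ℕ)) : Prop :=
  (∀ X ∈ G, X.Infinite) ∧
  (∀ X ∈ G, ∀ Y : Set ℕ, Y ⊆ X → Y.Infinite → Y ∈ G) ∧
  (∀ X ∈ G, ∀ Y : Set ℕ, (symmDiff X Y).Finite → Y ∈ G) ∧
  (∀ a : ℕ → ℕ, a 0 = 0 → StrictMono a →
    ∃ K : Set ℕ, K.Infinite ∧ (⋃ k ∈ K, Set.Ico (a k) (a (k + 1))) ∈ G)

/-- The groupwise density number 𝔤. -/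
noncomputable def groupwiseDensityNumber : Cardinal :=
  sInf {c : Cardinal | ∃ 𝒢 : Set (Set (Set ℕ)),
    (∀ G ∈ 𝒢, GroupwiseDense G) ∧ ⋂₀ 𝒢 = ∅ ∧ c = #𝒢}

/-- `U` is a pseudo-P_κ point. -/
def PseudoPPoint (U : Ultrafilter ℕ) (κ : Cardinal) : Prop :=
  ∀ F : Set (Set ℕ), (∀ A ∈ F, A ∈ U) → #F < κ →
    ∃ A : Set ℕ, A.Infinite ∧ ∀ B ∈ F, (A \ B).Finite

/-- A finite-to-one function on ℕ. -/
def FinToOne (f : ℕ → ℕ) : Prop := ∀ n : ℕ, (f ⁻¹' {n}).Finite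

/-- Two ultrafilters are nearly coherent if they have a common image under
finite-to-one maps. -/
def NearlyCoherent (U U' : Ultrafilter ℕ) : Prop :=
  ∃ f f' : ℕ → ℕ, FinToOne f ∧ FinToOne f' ∧
    Ultrafilter.map f U = Ultrafilter.map f' U'

/-- `nuX X n` is the least element of `X` greater than `n`. -/
noncomputable def nuX (X : Set ℕ) (n : ℕ) : ℕ := sInf {m : ℕ | m ∈ X ∧ n < m}


/-! ### Auxiliary machinery -/

/-- Iterates of `g` starting at 0: the interval partition determined by `g`. -/
noncomputable def itr (g : ℕ → ℕ) (k : ℕ) : ℕ := g^[k] 0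

/-- The index of the block of the partition `itr g` containing `n`. -/
noncomputable def idx (g : ℕ → ℕ) (n : ℕ) : ℕ := sInf {k | n < itr g (k + 1)}

lemma itr_zero (g : ℕ → ℕ) : itr g 0 = 0 := rfl

lemma itr_succ (g : ℕ → ℕ) (k : ℕ) : itr g (k + 1) = g (itr g k) :=
  Function.iterate_succ_apply' g k 0

lemma itr_strictMono {g : ℕ → ℕ} (hid : ∀ n, n < g n) : StrictMono (itr g) := by
  apply strictMono_nat_of_lt_succ
  intro k
  rw [itr_succ]
  exact hid _

lemma idx_set_nonempty {g : ℕ → ℕ} (hid : ∀ n, n < g n) (n : ℕ) :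
    {k | n < itr g (k + 1)}.Nonempty :=
  ⟨n, lt_of_lt_of_le (Nat.lt_succ_self n) (itr_strictMono hid).le_apply⟩

lemma lt_itr_idx {g : ℕ → ℕ} (hid : ∀ n, n < g n) (n : ℕ) :
    n < itr g (idx g n + 1) :=
  Nat.sInf_mem (idx_set_nonempty hid n)

lemma itr_idx_le {g : ℕ → ℕ} (hid : ∀ n, n < g n) (n : ℕ) :
    itr g (idx g n) ≤ n := by
  rcases h : idx g n with _ | j
  · rw [itr_zero]; exact Nat.zero_le n
  · by_contra hlt
    push_neg at hlt
    have hj : j ∈ {k | n < itr g (k + 1)} := hlt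
    have h2 : idx g n ≤ j := Nat.sInf_le hj
    omega

lemma idx_mono {g : ℕ → ℕ} (hid : ∀ n, n < g n) : Monotone (idx g) := by
  intro m n hmn
  exact Nat.sInf_le (lt_of_le_of_lt hmn (lt_itr_idx hid n))

lemma itr_le_of_le_idx {g : ℕ → ℕ} (hid : ∀ n, n < g n) {k m : ℕ}
    (h : k ≤ idx g m) : itr g k ≤ m :=
  le_trans ((itr_strictMono hid).monotone h) (itr_idx_le hid m)

lemma idx_finToOne {g : ℕ → ℕ} (hid : ∀ n, n < g n) : FinToOne (idx g) := by
  intro k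
  apply (Set.finite_Iio (itr g (k + 1))).subset
  intro n hn
  have heq : idx g n = k := hn
  have h := lt_itr_idx hid n
  rw [heq] at h
  exact h

lemma nuX_spec {X : Set ℕ} (hX : X.Infinite) (n : ℕ) : nuX X n ∈ X ∧ n < nuX X n := by
  have hne : {m : ℕ | m ∈ X ∧ n < m}.Nonempty := by
    obtain ⟨m, hm, hlt⟩ := hX.exists_gt n
    exact ⟨m, hm, hlt⟩
  exact Nat.sInf_mem hne

/-- Key step: if `A` is a union of blocks of the partition of `g`, `X ⊆ A` and
`Y ⊆ Aᶜ` above `N`, then the next-element function jumps past a block boundary. -/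
lemma step_block {g : ℕ → ℕ} (hid : ∀ n, n < g n) {X Y A : Set ℕ}
    (hX : X.Infinite) (hY : Y.Infinite)
    (hsep : ∀ a b : ℕ, a ∈ A → b ∉ A → idx g a ≠ idx g b)
    {N : ℕ} (hXN : ∀ m ∈ X, N ≤ m → m ∈ A) (hYN : ∀ m ∈ Y, N ≤ m → m ∉ A) :
    ∀ n, N ≤ n → idx g n + 1 ≤ idx g (max (nuX X n) (nuX Y n)) ∧
      n < max (nuX X n) (nuX Y n) := by
  intro n hn
  obtain ⟨haX, han⟩ := nuX_spec hX n
  obtain ⟨hbY, hbn⟩ := nuX_spec hY n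
  set a := nuX X n with ha
  set b := nuX Y n with hb
  have haA : a ∈ A := hXN a haX (le_trans hn (le_of_lt han))
  have hbA : b ∉ A := hYN b hbY (le_trans hn (le_of_lt hbn))
  have hne : idx g a ≠ idx g b := hsep a b haA hbA
  have hia : idx g n ≤ idx g a := idx_mono hid (le_of_lt han)
  have hib : idx g n ≤ idx g b := idx_mono hid (le_of_lt hbn)
  have hmax : idx g (max a b) = max (idx g a) (idx g b) := (idx_mono hid).map_max
  constructor
  · rw [hmax]
    rcases Nat.le_total (idx g a) (idx g b) with h | h
    · rw [Nat.max_eq_right h]; omega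
    · rw [Nat.max_eq_left h]; omega
  · exact lt_of_lt_of_le han (le_max_left a b)

/-- Main domination lemma: `p ∘ p` eventually strictly dominates `g`. -/
lemma main_dom {g : ℕ → ℕ} (hsm : StrictMono g) (hid : ∀ n, n < g n)
    {X Y A : Set ℕ} (hX : X.Infinite) (hY : Y.Infinite)
    (hsep : ∀ a b : ℕ, a ∈ A → b ∉ A → idx g a ≠ idx g b)
    {N : ℕ} (hXN : ∀ m ∈ X, N ≤ m → m ∈ A) (hYN : ∀ m ∈ Y, N ≤ m → m ∉ A) :
    ∀ n, N ≤ n →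
      g n < (fun m => max (nuX X m) (nuX Y m)) ((fun m => max (nuX X m) (nuX Y m)) n) := by
  intro n hn
  set p : ℕ → ℕ := fun m => max (nuX X m) (nuX Y m) with hp
  have step := step_block hid hX hY hsep hXN hYN
  obtain ⟨h1, h1'⟩ := step n hn
  have hpnN : N ≤ p n := le_trans hn (le_of_lt h1')
  obtain ⟨h2, h2'⟩ := step (p n) hpnN
  have e1 : idx g n + 1 ≤ idx g (p n) := h1
  have e2 : idx g (p n) + 1 ≤ idx g (p (p n)) := h2
  have hidx : idx g n + 2 ≤ idx g (p (p n)) := by omega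
  have hitr : itr g (idx g n + 2) ≤ p (p n) := itr_le_of_le_idx hid hidx
  have heq : itr g (idx g n + 2) = g (itr g (idx g n + 1)) := itr_succ g _
  have hlt : n < itr g (idx g n + 1) := lt_itr_idx hid n
  calc g n < g (itr g (idx g n + 1)) := hsm hlt
    _ = itr g (idx g n + 2) := heq.symm
    _ ≤ p (p n) := hitr

/-- The strictly-increasing majorization of `g`. -/
noncomputable def Tfun (g : ℕ → ℕ) : ℕ → ℕ :=
  fun n => n + 1 + ∑ i ∈ Finset.range (n + 1), g i

lemma Tfun_strictMono (g : ℕ → ℕ) : StrictMono (Tfun g) := by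
  apply strictMono_nat_of_lt_succ
  intro n
  unfold Tfun
  have : ∑ i ∈ Finset.range (n + 1), g i ≤ ∑ i ∈ Finset.range (n + 1 + 1), g i :=
    Finset.sum_le_sum_of_subset (Finset.range_subset_range.mpr (by omega))
  omega

lemma Tfun_id_lt (g : ℕ → ℕ) (n : ℕ) : n < Tfun g n := by
  unfold Tfun; omega

lemma le_Tfun (g : ℕ → ℕ) (n : ℕ) : g n ≤ Tfun g n := by
  have : g n ≤ ∑ i ∈ Finset.range (n + 1), g i :=
    Finset.single_le_sum (f := g) (fun i _ => Nat.zero_le _)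
      (Finset.self_mem_range_succ n)
  unfold Tfun; omega

/-- Any two pseudo-P_{𝔟⁺} points are nearly coherent. -/
theorem stmt_6 (U U' : Ultrafilter ℕ) (hU : Nonprincipal U) (hU' : Nonprincipal U')
    (hP : PseudoPPoint U (Order.succ boundingNumber))
    (hP' : PseudoPPoint U' (Order.succ boundingNumber)) :
    NearlyCoherent U U' := by
  by_contra hNC
  -- Obtain an unbounded family of cardinality 𝔟.
  have hne : {c : Cardinal | ∃ B : Set (ℕ → ℕ),
      (∀ f : ℕ → ℕ, ∃ g ∈ B, {n : ℕ | f n ≤ g n}.Infinite) ∧ c = #B}.Nonempty := by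
    refine ⟨#(Set.univ : Set (ℕ → ℕ)), Set.univ, fun f => ⟨f, Set.mem_univ f, ?_⟩, rfl⟩
    simpa using Set.infinite_univ (α := ℕ)
  have hmem : boundingNumber ∈ {c : Cardinal | ∃ B : Set (ℕ → ℕ),
      (∀ f : ℕ → ℕ, ∃ g ∈ B, {n : ℕ | f n ≤ g n}.Infinite) ∧ c = #B} := by
    rw [boundingNumber]
    exact csInf_mem hne
  obtain ⟨B₀, hB₀, hcard⟩ := hmem
  -- For each g, non-near-coherence provides a block-union set in U with complement in U'.
  have key : ∀ g : ℕ → ℕ, ∃ A : Set ℕ, A ∈ U ∧ Aᶜ ∈ U' ∧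
      ∀ a b : ℕ, a ∈ A → b ∉ A → idx (Tfun g) a ≠ idx (Tfun g) b := by
    intro g
    have hfin : FinToOne (idx (Tfun g)) := idx_finToOne (Tfun_id_lt g)
    have hneq : Ultrafilter.map (idx (Tfun g)) U ≠ Ultrafilter.map (idx (Tfun g)) U' :=
      fun h => hNC ⟨idx (Tfun g), idx (Tfun g), hfin, hfin, h⟩
    have hex : ∃ s : Set ℕ, s ∈ Ultrafilter.map (idx (Tfun g)) U ∧
        s ∉ Ultrafilter.map (idx (Tfun g)) U' := by
      by_contra h
      push_neg at h
      apply hneq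
      symm
      apply Ultrafilter.coe_le_coe.mp
      intro s hs
      exact h s hs
    obtain ⟨s, hs1, hs2⟩ := hex
    refine ⟨(idx (Tfun g)) ⁻¹' s, Ultrafilter.mem_map.mp hs1, ?_, ?_⟩
    · have hc : sᶜ ∈ Ultrafilter.map (idx (Tfun g)) U' :=
        Ultrafilter.compl_mem_iff_notMem.mpr hs2
      have h2 := Ultrafilter.mem_map.mp hc
      simpa [Set.preimage_compl] using h2
    · intro a b haA hbA hab
      exact hbA (by rw [Set.mem_preimage, ← hab]; exact haA)
  choose A hA1 hA2 hA3 using key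
  -- Apply the pseudo-P property to both families.
  have hcardF : #(A '' B₀) < Order.succ boundingNumber :=
    lt_of_le_of_lt (le_trans Cardinal.mk_image_le (le_of_eq hcard.symm))
      (Order.lt_succ boundingNumber)
  obtain ⟨X, hXinf, hXsub⟩ := hP (A '' B₀)
    (by rintro _ ⟨g, hg, rfl⟩; exact hA1 g) hcardF
  have hcardF' : #((fun g => (A g)ᶜ) '' B₀) < Order.succ boundingNumber :=
    lt_of_le_of_lt (le_trans Cardinal.mk_image_le (le_of_eq hcard.symm))
      (Order.lt_succ boundingNumber)
  obtain ⟨Y, hYinf, hYsub⟩ := hP' ((fun g => (A g)ᶜ) '' B₀)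
    (by rintro _ ⟨g, hg, rfl⟩; exact hA2 g) hcardF'
  -- The function p ∘ p, where p jumps to the next elements of X and Y.
  set p : ℕ → ℕ := fun m => max (nuX X m) (nuX Y m) with hp
  obtain ⟨g, hgB, hginf⟩ := hB₀ (fun n => p (p n))
  have hXf : (X \ A g).Finite := hXsub (A g) (Set.mem_image_of_mem A hgB)
  have hYf : (Y \ (A g)ᶜ).Finite := hYsub ((A g)ᶜ)
    (Set.mem_image_of_mem (fun g => (A g)ᶜ) hgB)
  -- Find a threshold N beyond which X ⊆ A g and Y ⊆ (A g)ᶜ.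
  obtain ⟨N₁, hN₁⟩ : ∃ N₁, ∀ m ∈ X \ A g, m ≤ N₁ := by
    rcases hXf.bddAbove with ⟨N₁, hN₁⟩
    exact ⟨N₁, fun m hm => hN₁ hm⟩
  obtain ⟨N₂, hN₂⟩ : ∃ N₂, ∀ m ∈ Y \ (A g)ᶜ, m ≤ N₂ := by
    rcases hYf.bddAbove with ⟨N₂, hN₂⟩
    exact ⟨N₂, fun m hm => hN₂ hm⟩
  set N := max N₁ N₂ + 1 with hN
  have hXN : ∀ m ∈ X, N ≤ m → m ∈ A g := by
    intro m hm hNm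
    by_contra hc
    have := hN₁ m ⟨hm, hc⟩
    omega
  have hYN : ∀ m ∈ Y, N ≤ m → m ∉ A g := by
    intro m hm hNm hc
    have := hN₂ m ⟨hm, fun h => h hc⟩
    omega
  have hmain := main_dom (Tfun_strictMono g) (Tfun_id_lt g) hXinf hYinf
    (hA3 g) hXN hYN
  -- Contradiction with unboundedness.
  have hsub : {n : ℕ | (fun n => p (p n)) n ≤ g n} ⊆ Set.Iio N := by
    intro n hn
    simp only [Set.mem_setOf_eq] at hn
    by_contra hc
    simp only [Set.mem_Iio, not_lt] at hc
    have h1 : Tfun g n < p (p n) := hmain n hc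
    have h2 : g n ≤ Tfun g n := le_Tfun g n
    omega
  exact hginf ((Set.finite_Iio N).subset hsub)
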